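/- Along every C¹ solution s ↦ (r_*(s),θ(s),ξ(s),q(s)) of Hamilton's equations for P* with θ(s) ∈ (0,π) and (ξ,q) ≠ (0,0), the energy E := P* is constant and the Carter-type quantity 𝒦 := q(s)² + a²E²·sin²θ(s) is constant; equivalently, (d/ds)q² = (d/ds)(a²E²cos²θ) along the flow. -/

import Mathlib

/-!
STATEMENT 13 (conservation of energy and of the Carter-type quantity along the
flow of the simple-null-geodesic Hamiltonian `P* = h²√(ξ² + a₀²q²)`).

Along every C¹ solution `s ↦ (r_*(s),θ(s),ξ(s),q(s))` of Hamilton's equations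
for `P*` with `θ(s) ∈ (0,π)` and `(ξ,q) ≠ (0,0)`, the energy `E := P*` is
constant and the Carter-type quantity `𝒦 := q(s)² + a²E²sin²θ(s)` is constant.
-/

noncomputable section
open Real Set

namespace Stmt13

/-- `Δ(r) = r² − 2Mr + a² + Q²`. -/
def Δ (M a Q r : ℝ) : ℝ := r ^ 2 - 2 * M * r + a ^ 2 + Q ^ 2

/-- Outer horizon `r₊`. -/
def rplus (M a Q : ℝ) : ℝ := M + Real.sqrt (M ^ 2 - (a ^ 2 + Q ^ 2))

/-- Inner horizon `r₋`. -/
def rminus (M a Q : ℝ) : ℝ := M - Real.sqrt (M ^ 2 - (a ^ 2 + Q ^ 2))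

/-- Surface gravity of the outer horizon. -/
def κplus (M a Q : ℝ) : ℝ :=
  (rplus M a Q - rminus M a Q) / (2 * ((rplus M a Q) ^ 2 + a ^ 2))

/-- Surface gravity of the inner horizon. -/
def κminus (M a Q : ℝ) : ℝ :=
  (rplus M a Q - rminus M a Q) / (2 * ((rminus M a Q) ^ 2 + a ^ 2))

/-- `σ²(r,θ) = (r²+a²)² − a²Δ(r)sin²θ`. -/
def sigma2 (M a Q r θ : ℝ) : ℝ :=
  (r ^ 2 + a ^ 2) ^ 2 - a ^ 2 * Δ M a Q r * Real.sin θ ^ 2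

/-- The Regge–Wheeler coordinate. -/
def rstar (M a Q R0 r : ℝ) : ℝ :=
  r + (1 / (2 * κplus M a Q)) * Real.log (r - rplus M a Q)
    - (1 / (2 * κminus M a Q)) * Real.log (r - rminus M a Q) + R0

/-- The simple-null-geodesic Hamiltonian in Regge–Wheeler variables,
`P*(r_*,θ;ξ,q) = h²√(ξ² + a₀²q²)` with `h² = (r²+a²)/σ`,
`a₀ = √Δ/(r²+a²)`, evaluated at `r = r(r_*)`. -/
def Pstar (M a Q : ℝ) (rinv : ℝ → ℝ) (x θ ξ q : ℝ) : ℝ :=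
  (((rinv x) ^ 2 + a ^ 2) / Real.sqrt (sigma2 M a Q (rinv x) θ)) *
    Real.sqrt (ξ ^ 2
      + (Real.sqrt (Δ M a Q (rinv x)) / ((rinv x) ^ 2 + a ^ 2)) ^ 2 * q ^ 2)


variable {M a Q R0 : ℝ}

section Facts
variable (hM : 0 < M) (ha : 0 < a) (hsub : a ^ 2 + Q ^ 2 < M ^ 2)
include hM ha hsub

omit hM ha in
lemma sqrt_disc_pos : 0 < Real.sqrt (M ^ 2 - (a ^ 2 + Q ^ 2)) :=
  Real.sqrt_pos.2 (by linarith)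

lemma rminus_lt_rplus : rminus M a Q < rplus M a Q := by
  have := sqrt_disc_pos hsub
  unfold rplus rminus; linarith

lemma M_lt_rplus : M < rplus M a Q := by
  have := sqrt_disc_pos hsub; unfold rplus; linarith

omit hM ha in
lemma delta_factor (r : ℝ) :
    Δ M a Q r = (r - rplus M a Q) * (r - rminus M a Q) := by
  have h0 : (0:ℝ) ≤ M ^ 2 - (a ^ 2 + Q ^ 2) := by linarith
  have hs : Real.sqrt (M ^ 2 - (a ^ 2 + Q ^ 2)) ^ 2 = M ^ 2 - (a ^ 2 + Q ^ 2) :=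
    Real.sq_sqrt h0
  unfold Δ rplus rminus; nlinarith [hs]

lemma delta_pos {r : ℝ} (hr : rplus M a Q < r) : 0 < Δ M a Q r := by
  rw [delta_factor hsub]
  have := rminus_lt_rplus hM ha hsub
  nlinarith

lemma sigma2_pos {r θ : ℝ} (hr : rplus M a Q < r) : 0 < sigma2 M a Q r θ := by
  have hD : 0 < Δ M a Q r := delta_pos hM ha hsub hr
  have hMr : M < r := lt_trans (M_lt_rplus hM ha hsub) hr
  have hs : Real.sin θ ^ 2 ≤ 1 := sin_sq_le_one θ
  have hs0 : 0 ≤ Real.sin θ ^ 2 := sq_nonneg _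
  have hDr : Δ M a Q r < r ^ 2 + a ^ 2 := by unfold Δ; nlinarith
  have ha2 : (0:ℝ) < a ^ 2 := by positivity
  have h1 : a ^ 2 * Δ M a Q r * Real.sin θ ^ 2 ≤ a ^ 2 * Δ M a Q r * 1 :=
    mul_le_mul_of_nonneg_left hs (by positivity)
  have h2 : a ^ 2 * Δ M a Q r < a ^ 2 * (r ^ 2 + a ^ 2) :=
    mul_lt_mul_of_pos_left hDr ha2
  have h3 : a ^ 2 * (r ^ 2 + a ^ 2) ≤ (r ^ 2 + a ^ 2) ^ 2 := by nlinarith [sq_nonneg r]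
  unfold sigma2; nlinarith

lemma hasDerivAt_rstar {R0 r : ℝ} (hr : rplus M a Q < r) :
    HasDerivAt (rstar M a Q R0) ((r ^ 2 + a ^ 2) / Δ M a Q r) r := by
  have hpm := rminus_lt_rplus hM ha hsub
  have h1 : (0:ℝ) < r - rplus M a Q := by linarith
  have h2 : (0:ℝ) < r - rminus M a Q := by linarith
  have hD : 0 < Δ M a Q r := delta_pos hM ha hsub hr
  have hTp : (0:ℝ) < rplus M a Q ^ 2 + a ^ 2 := by positivity
  have hTm : (0:ℝ) < rminus M a Q ^ 2 + a ^ 2 := by positivity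
  have hkp' : 0 < κplus M a Q := div_pos (by linarith) (by positivity)
  have hkm' : 0 < κminus M a Q := div_pos (by linarith) (by positivity)
  have hkp : κplus M a Q ≠ 0 := hkp'.ne'
  have hkm : κminus M a Q ≠ 0 := hkm'.ne'
  have hlog1 : HasDerivAt (fun x : ℝ => Real.log (x - rplus M a Q))
      (1 / (r - rplus M a Q)) r := by
    simpa using ((hasDerivAt_id r).sub_const (rplus M a Q)).log h1.ne'
  have hlog2 : HasDerivAt (fun x : ℝ => Real.log (x - rminus M a Q))
      (1 / (r - rminus M a Q)) r := by
    simpa using ((hasDerivAt_id r).sub_const (rminus M a Q)).log h2.ne'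
  have h := (((hasDerivAt_id r).add ((hlog1.const_mul (1 / (2 * κplus M a Q))))).sub
      (hlog2.const_mul (1 / (2 * κminus M a Q)))).add_const R0
  refine h.congr_deriv (Eq.symm ?_)
  have hpm0 : rplus M a Q - rminus M a Q ≠ 0 := sub_ne_zero.mpr hpm.ne'
  have e1 : 1 / (2 * κplus M a Q) = (rplus M a Q ^ 2 + a ^ 2) / (rplus M a Q - rminus M a Q) := by
    unfold κplus; rw [div_eq_div_iff (by positivity) hpm0] <;> field_simp <;> ring
  have e2 : 1 / (2 * κminus M a Q) = (rminus M a Q ^ 2 + a ^ 2) / (rplus M a Q - rminus M a Q) := by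
    unfold κminus; rw [div_eq_div_iff (by positivity) hpm0] <;> field_simp <;> ring
  rw [e1, e2, delta_factor hsub]
  field_simp [hpm0]
  ring

lemma rstar_strictMonoOn (R0 : ℝ) :
    StrictMonoOn (rstar M a Q R0) (Ioi (rplus M a Q)) := by
  apply strictMonoOn_of_hasDerivWithinAt_pos (convex_Ioi _)
    (fun r hr => ((hasDerivAt_rstar hM ha hsub hr).continuousAt).continuousWithinAt)
    (f' := fun r => (r ^ 2 + a ^ 2) / Δ M a Q r)
  · intro r hr
    rw [interior_Ioi] at hr
    exact (hasDerivAt_rstar hM ha hsub hr).hasDerivWithinAt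
  · intro r hr
    rw [interior_Ioi] at hr
    exact div_pos (by positivity) (delta_pos hM ha hsub hr)

end Facts

section Rinv
variable (hM : 0 < M) (ha : 0 < a) (hsub : a ^ 2 + Q ^ 2 < M ^ 2)
  (rinv : ℝ → ℝ)
  (hrinv : ∀ x : ℝ, rplus M a Q < rinv x ∧ rstar M a Q R0 (rinv x) = x)
  (hrinv' : ∀ r : ℝ, rplus M a Q < r → rinv (rstar M a Q R0 r) = r)
include hM ha hsub hrinv

lemma rinv_mono : Monotone rinv := by
  intro x y hxy
  by_contra hc
  push_neg at hc
  have := (rstar_strictMonoOn hM ha hsub (M:=M) (a:=a) (Q:=Q) R0)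
    (hrinv y).1 (hrinv x).1 hc
  rw [(hrinv x).2, (hrinv y).2] at this
  exact absurd hxy (not_le.2 this)

include hrinv' in
lemma rinv_continuousAt (x : ℝ) : ContinuousAt rinv x := by
  apply continuousAt_of_monotoneOn_of_image_mem_nhds
    (s := (univ : Set ℝ))
    (fun u _ v _ huv => rinv_mono hM ha hsub rinv hrinv huv) Filter.univ_mem
  have himg : Ioi (rplus M a Q) ⊆ rinv '' univ := by
    intro r hr
    exact ⟨rstar M a Q R0 r, mem_univ _, hrinv' r hr⟩
  exact Filter.mem_of_superset (Ioi_mem_nhds (hrinv x).1) himg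

include hrinv' in
lemma hasDerivAt_rinv (x : ℝ) :
    HasDerivAt rinv (Δ M a Q (rinv x) / ((rinv x) ^ 2 + a ^ 2)) x := by
  have hR := (hrinv x).1
  have hD := delta_pos hM ha hsub hR
  have hT : (0:ℝ) < (rinv x) ^ 2 + a ^ 2 := by positivity
  have hf : HasDerivAt (rstar M a Q R0)
      (((rinv x) ^ 2 + a ^ 2) / Δ M a Q (rinv x)) (rinv x) :=
    hasDerivAt_rstar hM ha hsub hR
  have h := HasDerivAt.of_local_left_inverse
    (rinv_continuousAt hM ha hsub rinv hrinv hrinv' x) hf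
    (by positivity)
    (Filter.Eventually.of_forall fun y => (hrinv y).2)
  simpa [inv_div] using h

end Rinv

/-- inner radicand `W² = ξ² + a₀²q²` (as written in `Pstar`). -/
def W2 (M a Q r ξ q : ℝ) : ℝ :=
  ξ ^ 2 + (Real.sqrt (Δ M a Q r) / (r ^ 2 + a ^ 2)) ^ 2 * q ^ 2

/-- `∂P*/∂x` (through `r = rinv x`, `dr/dx = Δ/(r²+a²)`). -/
def Cx (M a Q r θ ξ q : ℝ) : ℝ :=
  let T := r ^ 2 + a ^ 2
  let D := Δ M a Q r
  let s2 := Real.sqrt (sigma2 M a Q r θ)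
  let d := Real.sqrt D
  let w := Real.sqrt (W2 M a Q r ξ q)
  let ρ := D / T
  let T' := 2 * r * ρ
  let D' := (2 * r - 2 * M) * ρ
  let S2' := 2 * T * T' - a ^ 2 * D' * Real.sin θ ^ 2
  let S' := S2' / (2 * s2)
  let sd' := D' / (2 * d)
  let a0' := (sd' * T - d * T') / T ^ 2
  let W2' := 2 * (d / T) * a0' * q ^ 2
  (T' * s2 - T * S') / s2 ^ 2 * w + T / s2 * (W2' / (2 * w))

/-- `∂P*/∂θ`. -/
def Cθ (M a Q r θ ξ q : ℝ) : ℝ :=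
  (r ^ 2 + a ^ 2) * a ^ 2 * Δ M a Q r * Real.sin θ * Real.cos θ
    * Real.sqrt (W2 M a Q r ξ q) / Real.sqrt (sigma2 M a Q r θ) ^ 3

/-- `∂P*/∂ξ`. -/
def Cξ (M a Q r θ ξ q : ℝ) : ℝ :=
  (r ^ 2 + a ^ 2) / Real.sqrt (sigma2 M a Q r θ)
    * (ξ / Real.sqrt (W2 M a Q r ξ q))

/-- `∂P*/∂q`. -/
def Cq (M a Q r θ ξ q : ℝ) : ℝ :=
  (r ^ 2 + a ^ 2) / Real.sqrt (sigma2 M a Q r θ)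
    * ((Real.sqrt (Δ M a Q r) / (r ^ 2 + a ^ 2)) ^ 2 * q / Real.sqrt (W2 M a Q r ξ q))

section Key
variable (hM : 0 < M) (ha : 0 < a) (hsub : a ^ 2 + Q ^ 2 < M ^ 2)
  (rinv : ℝ → ℝ)
  (hrinv : ∀ x : ℝ, rplus M a Q < rinv x ∧ rstar M a Q R0 (rinv x) = x)
  (hrinv' : ∀ r : ℝ, rplus M a Q < r → rinv (rstar M a Q R0 r) = r)
include hM ha hsub hrinv hrinv'

set_option maxHeartbeats 2000000 in
lemma key (x θc ξ q : ℝ → ℝ) (s vx vθ vξ vq : ℝ)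
    (hx : HasDerivAt x vx s) (hθ : HasDerivAt θc vθ s)
    (hξ : HasDerivAt ξ vξ s) (hq : HasDerivAt q vq s)
    (hnz : ¬(ξ s = 0 ∧ q s = 0)) :
    HasDerivAt (fun t => Pstar M a Q rinv (x t) (θc t) (ξ t) (q t))
      (Cx M a Q (rinv (x s)) (θc s) (ξ s) (q s) * vx
        + Cθ M a Q (rinv (x s)) (θc s) (ξ s) (q s) * vθ
        + Cξ M a Q (rinv (x s)) (θc s) (ξ s) (q s) * vξ
        + Cq M a Q (rinv (x s)) (θc s) (ξ s) (q s) * vq) s := by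
  have hR : rplus M a Q < rinv (x s) := (hrinv (x s)).1
  have hD0 : 0 < Δ M a Q (rinv (x s)) := delta_pos hM ha hsub hR
  have hT0 : (0:ℝ) < (rinv (x s)) ^ 2 + a ^ 2 := by positivity
  have hS20 : 0 < sigma2 M a Q (rinv (x s)) (θc s) := sigma2_pos hM ha hsub hR
  have hd0 : 0 < Real.sqrt (Δ M a Q (rinv (x s))) := Real.sqrt_pos.2 hD0
  have hW20 : 0 < W2 M a Q (rinv (x s)) (ξ s) (q s) := by
    unfold W2
    rcases not_and_or.mp hnz with h | h
    · have : (0:ℝ) < ξ s ^ 2 := by positivity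
      nlinarith [mul_nonneg (sq_nonneg (Real.sqrt (Δ M a Q (rinv (x s)))
        / ((rinv (x s)) ^ 2 + a ^ 2))) (sq_nonneg (q s))]
    · have h1 : (0:ℝ) < (Real.sqrt (Δ M a Q (rinv (x s)))
          / ((rinv (x s)) ^ 2 + a ^ 2)) ^ 2 * q s ^ 2 := by
        have : q s ≠ 0 := h
        positivity
      nlinarith [sq_nonneg (ξ s)]
  have hs20 : 0 < Real.sqrt (sigma2 M a Q (rinv (x s)) (θc s)) := Real.sqrt_pos.2 hS20
  have hw0 : 0 < Real.sqrt (W2 M a Q (rinv (x s)) (ξ s) (q s)) := Real.sqrt_pos.2 hW20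
  have hr : HasDerivAt (fun t => rinv (x t))
      (Δ M a Q (rinv (x s)) / ((rinv (x s)) ^ 2 + a ^ 2) * vx) s := by
    have h1 := hasDerivAt_rinv hM ha hsub rinv hrinv hrinv' (x s)
    exact h1.comp s hx
  set ρ := Δ M a Q (rinv (x s)) / ((rinv (x s)) ^ 2 + a ^ 2) * vx with hρ
  have hT : HasDerivAt (fun t => (rinv (x t)) ^ 2 + a ^ 2)
      ((2:ℕ) * (rinv (x s)) ^ 1 * ρ) s := (hr.pow 2).add_const _
  have hD : HasDerivAt (fun t => Δ M a Q (rinv (x t)))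
      ((2:ℕ) * (rinv (x s)) ^ 1 * ρ - 2 * M * ρ) s := by
    unfold Δ
    exact (((hr.pow 2).sub (hr.const_mul (2 * M))).add_const _).add_const _
  have hsin : HasDerivAt (fun t => Real.sin (θc t)) (Real.cos (θc s) * vθ) s := hθ.sin
  have hS2 : HasDerivAt (fun t => sigma2 M a Q (rinv (x t)) (θc t))
      ((2:ℕ) * ((rinv (x s)) ^ 2 + a ^ 2) ^ 1 * ((2:ℕ) * (rinv (x s)) ^ 1 * ρ)
        - ((a ^ 2 * ((2:ℕ) * (rinv (x s)) ^ 1 * ρ - 2 * M * ρ)) * Real.sin (θc s) ^ 2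
           + (a ^ 2 * Δ M a Q (rinv (x s)))
             * ((2:ℕ) * Real.sin (θc s) ^ 1 * (Real.cos (θc s) * vθ)))) s := by
    unfold sigma2
    exact (hT.pow 2).sub ((hD.const_mul (a ^ 2)).mul (hsin.pow 2))
  have hS := hS2.sqrt hS20.ne'
  have hsD := hD.sqrt hD0.ne'
  have ha0 := hsD.div hT hT0.ne'
  have hW2 := (hξ.pow 2).add ((ha0.pow 2).mul (hq.pow 2))
  have hW20' : ξ s ^ 2
      + (Real.sqrt (Δ M a Q (rinv (x s))) / ((rinv (x s)) ^ 2 + a ^ 2)) ^ 2 * q s ^ 2 ≠ 0 := by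
    unfold W2 at hW20; exact hW20.ne'
  have hw := hW2.sqrt hW20'
  have hP := (hT.div hS hs20.ne').mul hw
  refine hP.congr_deriv (Eq.symm ?_)
  simp only [Cx, Cθ, Cξ, Cq, W2, Pi.div_apply, Pi.pow_apply, Pi.add_apply, Pi.mul_apply]
  rw [hρ]
  push_cast
  set d := Real.sqrt (Δ M a Q (rinv (x s))) with hd
  rw [show Δ M a Q (rinv (x s)) = d ^ 2 from by rw [hd, Real.sq_sqrt hD0.le]]
  set s2 := Real.sqrt (sigma2 M a Q (rinv (x s)) (θc s)) with hs2
  set w := Real.sqrt (ξ s ^ 2 + (d / ((rinv (x s)) ^ 2 + a ^ 2)) ^ 2 * q s ^ 2) with hw'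
  field_simp
  ring

end Key

set_option maxHeartbeats 4000000 in
theorem pstar_constants_of_motion (M a Q R0 : ℝ) (hM : 0 < M) (ha : 0 < a)
    (hsub : a ^ 2 + Q ^ 2 < M ^ 2)
    -- the inverse of the Regge–Wheeler coordinate
    (rinv : ℝ → ℝ)
    (hrinv : ∀ x : ℝ, rplus M a Q < rinv x ∧ rstar M a Q R0 (rinv x) = x)
    (hrinv' : ∀ r : ℝ, rplus M a Q < r → rinv (rstar M a Q R0 r) = r)
    -- a C¹ solution of Hamilton's equations for P*
    (x θc ξ q : ℝ → ℝ)
    (hθ : ∀ s, θc s ∈ Set.Ioo 0 Real.pi)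
    (hnz : ∀ s, ¬(ξ s = 0 ∧ q s = 0))
    (eqx : ∀ s, HasDerivAt x
      (deriv (fun u => Pstar M a Q rinv (x s) (θc s) u (q s)) (ξ s)) s)
    (eqθ : ∀ s, HasDerivAt θc
      (deriv (fun u => Pstar M a Q rinv (x s) (θc s) (ξ s) u) (q s)) s)
    (eqξ : ∀ s, HasDerivAt ξ
      (-deriv (fun u => Pstar M a Q rinv u (θc s) (ξ s) (q s)) (x s)) s)
    (eqq : ∀ s, HasDerivAt q
      (-deriv (fun u => Pstar M a Q rinv (x s) u (ξ s) (q s)) (θc s)) s) :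
    (∀ s s' : ℝ,
      Pstar M a Q rinv (x s) (θc s) (ξ s) (q s)
        = Pstar M a Q rinv (x s') (θc s') (ξ s') (q s')) ∧
    (∀ s s' : ℝ,
      (q s) ^ 2 + a ^ 2 * (Pstar M a Q rinv (x s) (θc s) (ξ s) (q s)) ^ 2
          * Real.sin (θc s) ^ 2
        = (q s') ^ 2 + a ^ 2 * (Pstar M a Q rinv (x s') (θc s') (ξ s') (q s')) ^ 2
            * Real.sin (θc s') ^ 2) := by
  have hCx : ∀ s, deriv (fun u => Pstar M a Q rinv u (θc s) (ξ s) (q s)) (x s)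
      = Cx M a Q (rinv (x s)) (θc s) (ξ s) (q s) := by
    intro s
    have h := key hM ha hsub rinv hrinv hrinv' id (fun _ => θc s) (fun _ => ξ s) (fun _ => q s)
      (x s) 1 0 0 0 (hasDerivAt_id _) (hasDerivAt_const _ _) (hasDerivAt_const _ _)
      (hasDerivAt_const _ _) (hnz s)
    simpa using h.deriv
  have hCθ : ∀ s, deriv (fun u => Pstar M a Q rinv (x s) u (ξ s) (q s)) (θc s)
      = Cθ M a Q (rinv (x s)) (θc s) (ξ s) (q s) := by
    intro s
    have h := key hM ha hsub rinv hrinv hrinv' (fun _ => x s) id (fun _ => ξ s) (fun _ => q s)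
      (θc s) 0 1 0 0 (hasDerivAt_const _ _) (hasDerivAt_id _) (hasDerivAt_const _ _)
      (hasDerivAt_const _ _) (hnz s)
    simpa using h.deriv
  have hCξ : ∀ s, deriv (fun u => Pstar M a Q rinv (x s) (θc s) u (q s)) (ξ s)
      = Cξ M a Q (rinv (x s)) (θc s) (ξ s) (q s) := by
    intro s
    have h := key hM ha hsub rinv hrinv hrinv' (fun _ => x s) (fun _ => θc s) id (fun _ => q s)
      (ξ s) 0 0 1 0 (hasDerivAt_const _ _) (hasDerivAt_const _ _) (hasDerivAt_id _)
      (hasDerivAt_const _ _) (hnz s)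
    simpa using h.deriv
  have hCq : ∀ s, deriv (fun u => Pstar M a Q rinv (x s) (θc s) (ξ s) u) (q s)
      = Cq M a Q (rinv (x s)) (θc s) (ξ s) (q s) := by
    intro s
    have h := key hM ha hsub rinv hrinv hrinv' (fun _ => x s) (fun _ => θc s) (fun _ => ξ s) id
      (q s) 0 0 0 1 (hasDerivAt_const _ _) (hasDerivAt_const _ _) (hasDerivAt_const _ _)
      (hasDerivAt_id _) (hnz s)
    simpa using h.deriv
  -- the energy has vanishing derivative along the flow
  have hE : ∀ t, HasDerivAt (fun u => Pstar M a Q rinv (x u) (θc u) (ξ u) (q u)) 0 t := by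
    intro t
    have hx' := eqx t; rw [hCξ t] at hx'
    have hθ' := eqθ t; rw [hCq t] at hθ'
    have hξ' := eqξ t; rw [hCx t] at hξ'
    have hq' := eqq t; rw [hCθ t] at hq'
    have h := key hM ha hsub rinv hrinv hrinv' x θc ξ q t _ _ _ _ hx' hθ' hξ' hq' (hnz t)
    convert h using 1
    ring
  have hEconst : ∀ s s' : ℝ,
      Pstar M a Q rinv (x s) (θc s) (ξ s) (q s)
        = Pstar M a Q rinv (x s') (θc s') (ξ s') (q s') := fun s s' =>
    is_const_of_deriv_eq_zero (fun t => (hE t).differentiableAt) (fun t => (hE t).deriv) s s'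
  refine ⟨hEconst, ?_⟩
  -- the Carter-type quantity has vanishing derivative along the flow
  have hK : ∀ t, HasDerivAt (fun u => (q u) ^ 2
      + a ^ 2 * (Pstar M a Q rinv (x u) (θc u) (ξ u) (q u)) ^ 2 * Real.sin (θc u) ^ 2) 0 t := by
    intro t
    have hθ' := eqθ t; rw [hCq t] at hθ'
    have hq' := eqq t; rw [hCθ t] at hq'
    have h := (hq'.pow 2).add ((((hE t).pow 2).const_mul (a ^ 2)).mul ((hθ'.sin).pow 2))
    refine h.congr_deriv (Eq.symm ?_)
    have hR : rplus M a Q < rinv (x t) := (hrinv (x t)).1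
    have hD0 : 0 < Δ M a Q (rinv (x t)) := delta_pos hM ha hsub hR
    have hT0 : (0:ℝ) < (rinv (x t)) ^ 2 + a ^ 2 := by positivity
    have hS20 : 0 < sigma2 M a Q (rinv (x t)) (θc t) := sigma2_pos hM ha hsub hR
    have hd0 : 0 < Real.sqrt (Δ M a Q (rinv (x t))) := Real.sqrt_pos.2 hD0
    have hW20 : 0 < W2 M a Q (rinv (x t)) (ξ t) (q t) := by
      unfold W2
      rcases not_and_or.mp (hnz t) with h' | h'
      · have : (0:ℝ) < ξ t ^ 2 := by positivity
        nlinarith [mul_nonneg (sq_nonneg (Real.sqrt (Δ M a Q (rinv (x t)))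
          / ((rinv (x t)) ^ 2 + a ^ 2))) (sq_nonneg (q t))]
      · have h1 : (0:ℝ) < (Real.sqrt (Δ M a Q (rinv (x t)))
            / ((rinv (x t)) ^ 2 + a ^ 2)) ^ 2 * q t ^ 2 := by
          have : q t ≠ 0 := h'
          positivity
        nlinarith [sq_nonneg (ξ t)]
    have hs20 : 0 < Real.sqrt (sigma2 M a Q (rinv (x t)) (θc t)) := Real.sqrt_pos.2 hS20
    have hw0 : 0 < Real.sqrt (W2 M a Q (rinv (x t)) (ξ t) (q t)) := Real.sqrt_pos.2 hW20
    have hid : q t * Cθ M a Q (rinv (x t)) (θc t) (ξ t) (q t)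
        = a ^ 2 * (Pstar M a Q rinv (x t) (θc t) (ξ t) (q t)) ^ 2 * Real.sin (θc t)
          * Real.cos (θc t) * Cq M a Q (rinv (x t)) (θc t) (ξ t) (q t) := by
      simp only [Cθ, Cq, W2, Pstar]
      set d := Real.sqrt (Δ M a Q (rinv (x t))) with hd
      rw [show Δ M a Q (rinv (x t)) = d ^ 2 from by rw [hd, Real.sq_sqrt hD0.le]]
      set s2 := Real.sqrt (sigma2 M a Q (rinv (x t)) (θc t)) with hs2
      set w := Real.sqrt (ξ t ^ 2 + (d / ((rinv (x t)) ^ 2 + a ^ 2)) ^ 2 * q t ^ 2) with hw'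
      set T := (rinv (x t)) ^ 2 + a ^ 2 with hT
      clear_value d s2 w T
      have h1 : T ≠ 0 := hT0.ne'
      have h2 : s2 ≠ 0 := hs20.ne'
      have h4 : d ≠ 0 := hd0.ne'
      have h3 : w ≠ 0 := by
        rw [hw', hd, hT]
        have h5 := hW20
        unfold W2 at h5
        exact (Real.sqrt_pos.2 h5).ne'
      field_simp
    simp only [Pi.pow_apply]
    push_cast
    linear_combination (2:ℝ) * hid
  exact fun s s' =>
    is_const_of_deriv_eq_zero (fun t => (hK t).differentiableAt) (fun t => (hK t).deriv) s s'


end Stmt13
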